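/- Let a ∈ [0,1]^n be a row with at most k nonzeros that is k-roundable, d ∈ (ℤ_{≥0} ∪ {∞})^n, and x* ∈ ℝ_{≥0}^n with x* ≤ d. Set F = {j ∈ supp(a) : x*_j ≥ d_j/k} and x̂ = min(d, ⌊k x*⌋) componentwise. If F is nonempty, Σ_{j∈F} a_j d_j < 1, and Σ_{j∉F} min(a_j, 1 − Σ_{j'∈F} a_{j'} d_{j'}) x*_j ≥ 1 − Σ_{j∈F} a_j d_j, then a·x̂ ≥ 1. -/

import Mathlib

open Classical in
theorem stmt_11 (n k : ℕ) (hk : 0 < k)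
    (a : Fin n → ℝ) (ha0 : ∀ j, 0 ≤ a j) (ha1 : ∀ j, a j ≤ 1)
    (hsparse : (Finset.univ.filter (fun j => a j ≠ 0)).card ≤ k)
    (hround : ∀ x : Fin n → ℝ, (∀ j, 0 ≤ x j) → 1 ≤ ∑ j, a j * x j →
      1 ≤ ∑ j, a j * (⌊(k : ℝ) * x j⌋ : ℝ))
    (d : Fin n → WithTop ℕ)
    (xs : Fin n → ℝ) (hxs0 : ∀ j, 0 ≤ xs j)
    (hxsd : ∀ j (m : ℕ), d j = (m : WithTop ℕ) → xs j ≤ (m : ℝ))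
    (F : Finset (Fin n))
    (hF : ∀ j, j ∈ F ↔ (0 < a j ∧ ∃ m : ℕ, d j = (m : WithTop ℕ) ∧ (m : ℝ) / (k : ℝ) ≤ xs j))
    (hFne : F.Nonempty)
    (hFd : ∑ j ∈ F, a j * (((d j).untopD 0 : ℕ) : ℝ) < 1)
    (hKC : 1 - ∑ j ∈ F, a j * (((d j).untopD 0 : ℕ) : ℝ)
        ≤ ∑ j ∈ Finset.univ \ F,
            min (a j) (1 - ∑ j' ∈ F, a j' * (((d j').untopD 0 : ℕ) : ℝ)) * xs j)
    (xhat : Fin n → ℝ)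
    (hxhat : ∀ j, xhat j =
      if d j = ⊤ then (⌊(k : ℝ) * xs j⌋ : ℝ)
      else min (((d j).untopD 0 : ℕ) : ℝ) (⌊(k : ℝ) * xs j⌋ : ℝ)) :
    1 ≤ ∑ j, a j * xhat j := by
  set D := ∑ j ∈ F, a j * (((d j).untopD 0 : ℕ) : ℝ) with hD
  have hβ : (0:ℝ) < 1 - D := by linarith
  have hk' : (0:ℝ) < (k:ℝ) := by exact_mod_cast hk
  set supp := Finset.univ.filter (fun j => a j ≠ 0) with hsupp
  set S := (Finset.univ \ F).filter (fun j => a j ≠ 0 ∧ xs j ≠ 0) with hS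
  set c : Fin n → ℝ := fun j => min (a j) (1 - D) with hc
  have hc0 : ∀ j, 0 ≤ c j := fun j => le_min (ha0 j) (le_of_lt hβ)
  have hcβ : ∀ j, c j ≤ 1 - D := fun j => min_le_right _ _
  have hca : ∀ j, c j ≤ a j := fun j => min_le_left _ _
  -- cardinality bound
  have hFsupp : F ⊆ supp := by
    intro j hj
    simp only [hsupp, Finset.mem_filter, Finset.mem_univ, true_and]
    exact ne_of_gt ((hF j).1 hj).1
  have hSsub : S ⊆ supp \ F := by
    intro j hj
    simp only [hS, Finset.mem_filter, Finset.mem_sdiff, Finset.mem_univ, true_and] at hj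
    simp only [Finset.mem_sdiff, hsupp, Finset.mem_filter, Finset.mem_univ, true_and]
    exact ⟨hj.2.1, hj.1⟩
  have hScard : S.card + 1 ≤ k := by
    have h1 : S.card ≤ (supp \ F).card := Finset.card_le_card hSsub
    have h2 : (supp \ F).card + F.card = supp.card := Finset.card_sdiff_add_card_eq_card hFsupp
    have h3 : 1 ≤ F.card := Finset.card_pos.mpr hFne
    omega
  -- floor values on F
  have hFval : ∀ j ∈ F, a j * xhat j = a j * (((d j).untopD 0 : ℕ) : ℝ) := by
    intro j hj
    obtain ⟨haj, m, hdm, hmk⟩ := (hF j).1 hj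
    have hut : (((d j).untopD 0 : ℕ) : ℝ) = (m : ℝ) := by rw [hdm]; rfl
    have hfl : (m : ℝ) ≤ (⌊(k : ℝ) * xs j⌋ : ℝ) := by
      have hkm : (m : ℝ) ≤ (k : ℝ) * xs j := by
        rw [div_le_iff₀ hk'] at hmk; linarith
      have : ((m : ℤ) : ℝ) ≤ (k : ℝ) * xs j := by push_cast; exact hkm
      have := Int.le_floor.mpr this
      exact_mod_cast this
    rw [hxhat j, if_neg (by rw [hdm]; exact WithTop.coe_ne_top), hut,
      min_eq_left hfl]
  -- off F: a j * xhat j ≥ c j * floor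
  have hoff : ∀ j ∈ Finset.univ \ F, c j * (⌊(k : ℝ) * xs j⌋ : ℝ) ≤ a j * xhat j := by
    intro j hj
    rcases eq_or_ne (a j) 0 with h0 | h0
    · have : c j = 0 := by simp [hc, h0, le_of_lt hβ]
      rw [this, h0]; simp
    · have hfl0 : (0:ℝ) ≤ (⌊(k : ℝ) * xs j⌋ : ℝ) := by
        have : (0:ℤ) ≤ ⌊(k : ℝ) * xs j⌋ :=
          Int.floor_nonneg.mpr (mul_nonneg (le_of_lt hk') (hxs0 j))
        exact_mod_cast this
      have hxj : xhat j = (⌊(k : ℝ) * xs j⌋ : ℝ) := by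
        rw [hxhat j]
        rcases eq_or_ne (d j) ⊤ with htop | htop
        · rw [if_pos htop]
        · rw [if_neg htop]
          obtain ⟨m, hdm⟩ := Option.ne_none_iff_exists'.mp htop
          have hjF : j ∉ F := (Finset.mem_sdiff.mp hj).2
          have hnm : ¬ ((m : ℝ) / (k : ℝ) ≤ xs j) := by
            intro hle
            exact hjF ((hF j).2 ⟨lt_of_le_of_ne (ha0 j) (Ne.symm h0), m, hdm, hle⟩)
          push_neg at hnm
          have hfl : (⌊(k : ℝ) * xs j⌋ : ℝ) ≤ (m : ℝ) := by
            have h1 : (k : ℝ) * xs j < (m : ℝ) := by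
              rw [lt_div_iff₀ hk'] at hnm; linarith
            have h2 : (⌊(k : ℝ) * xs j⌋ : ℝ) ≤ (k : ℝ) * xs j := Int.floor_le _
            linarith
          have hut : (((d j).untopD 0 : ℕ) : ℝ) = (m : ℝ) := by rw [hdm]; rfl
          rw [hut, min_eq_right hfl]
      rw [hxj]
      exact mul_le_mul_of_nonneg_right (hca j) hfl0
  -- key bound: sum over off-F of c j * floor ≥ 1 - D
  have hkey : 1 - D ≤ ∑ j ∈ Finset.univ \ F, c j * (⌊(k : ℝ) * xs j⌋ : ℝ) := by
    have hterm : ∀ j ∈ Finset.univ \ F,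
        (k : ℝ) * (c j * xs j) - (if j ∈ S then (1 - D) else 0)
          ≤ c j * (⌊(k : ℝ) * xs j⌋ : ℝ) := by
      intro j hj
      by_cases hjS : j ∈ S
      · simp only [if_pos hjS]
        have hfl : (k : ℝ) * xs j - 1 < (⌊(k : ℝ) * xs j⌋ : ℝ) := Int.sub_one_lt_floor _
        nlinarith [hc0 j, hcβ j]
      · simp only [if_neg hjS]
        have : a j = 0 ∨ xs j = 0 := by
          by_contra hcon
          push_neg at hcon
          exact hjS (by simp [hS, Finset.mem_sdiff.mp hj, hcon.1, hcon.2])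
        rcases this with h0 | h0
        · have : c j = 0 := by simp [hc, h0, le_of_lt hβ]
          simp [this]
        · simp [h0]
    have hsum := Finset.sum_le_sum hterm
    have hS1 : ∑ j ∈ Finset.univ \ F, (if j ∈ S then (1 - D) else 0)
        = (1 - D) * S.card := by
      rw [Finset.sum_ite_mem]
      have : (Finset.univ \ F) ∩ S = S := by
        apply Finset.inter_eq_right.mpr
        intro j hj
        simp only [hS, Finset.mem_filter] at hj
        exact hj.1
      rw [this, Finset.sum_const, nsmul_eq_mul, mul_comm]
    rw [Finset.sum_sub_distrib, hS1, ← Finset.mul_sum] at hsum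
    have hSk : (S.card : ℝ) ≤ (k : ℝ) - 1 := by
      have : (S.card : ℝ) + 1 ≤ (k : ℝ) := by exact_mod_cast hScard
      linarith
    have hKC' : (k : ℝ) * (1 - D) ≤ (k : ℝ) * ∑ j ∈ Finset.univ \ F, c j * xs j :=
      mul_le_mul_of_nonneg_left hKC (le_of_lt hk')
    nlinarith [hβ]
  -- combine
  have hsplit : ∑ j, a j * xhat j
      = ∑ j ∈ Finset.univ \ F, a j * xhat j + ∑ j ∈ F, a j * xhat j := by
    rw [Finset.sum_sdiff (Finset.subset_univ F)]
  have hFsum : ∑ j ∈ F, a j * xhat j = D := by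
    rw [hD]; exact Finset.sum_congr rfl hFval
  have hoffsum : ∑ j ∈ Finset.univ \ F, c j * (⌊(k : ℝ) * xs j⌋ : ℝ)
      ≤ ∑ j ∈ Finset.univ \ F, a j * xhat j := Finset.sum_le_sum hoff
  rw [hsplit, hFsum]
  linarith
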